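/- For every ordinal α < ω₁ there exists an ω-sequence T̄ = ⟨T_n : n < ω⟩ of (2,2)-trees such that degsq(T̄) = α. -/

import Mathlib

open FirstOrder Cardinal

namespace Sh522


/-- A `(2,2)`-tree: a set of pairs `(σ, τ)` with `σ, τ ∈ 2^n`, closed under
simultaneous restriction. -/
structure Tree2 : Type where
  mem : ∀ n : ℕ, Set ((Fin n → Bool) × (Fin n → Bool))
  closed : ∀ (n : ℕ) (x : (Fin n → Bool) × (Fin n → Bool)),
    x ∈ mem n → ∀ (m : ℕ) (h : m ≤ n),
      ((fun i => x.1 (Fin.castLE h i)), (fun i => x.2 (Fin.castLE h i))) ∈ mem m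

/-- `lim T = {(η,ν) ∈ 2^ω × 2^ω : ∀ n, (η↾n, ν↾n) ∈ T}`. -/
def lim2 (T : Tree2) : Set ((ℕ → Bool) × (ℕ → Bool)) :=
  {p | ∀ n : ℕ, ((fun i : Fin n => p.1 i), (fun i : Fin n => p.2 i)) ∈ T.mem n}

/-- The domain of the square degree: pairs `(u, g)` with `u ⊆ 2^n` and
`g` a 2-place `ω`-valued function (only its values on `u` matter). -/
def PfAp : Type :=
  Σ n : ℕ, Set (Fin n → Bool) × ((Fin n → Bool) → (Fin n → Bool) → ℕ)

/-- `degsq_{T̄}(u,g) ≥ −1` : `u` is nonempty and `(η,ν) ∈ T_{g(η,ν)}` for `η,ν ∈ u`. -/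
def degsqBase (Tb : ℕ → Tree2) (x : PfAp) : Prop :=
  x.2.1.Nonempty ∧ ∀ η ∈ x.2.1, ∀ ν ∈ x.2.1, (η, ν) ∈ (Tb (x.2.2 η ν)).mem x.1

/-- The successor step for the square degree: `degsq_{T̄}(u,g) ≥ β + 1` where `P`
is `degsq_{T̄}(−) ≥ β`. -/
def degsqStep (P : PfAp → Prop) (x : PfAp) : Prop :=
  x.2.1.Nonempty ∧
  ∀ ρ ∈ x.2.1, ∃ (m : ℕ) (hle : x.1 ≤ m) (u : Set (Fin m → Bool))
      (g : (Fin m → Bool) → (Fin m → Bool) → ℕ)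
      (h : Fin 2 → (Fin x.1 → Bool) → (Fin m → Bool)),
    (∀ (i : Fin 2), ∀ η ∈ x.2.1, ∀ j : Fin x.1, h i η (Fin.castLE hle j) = η j) ∧
    (∀ η ∈ x.2.1, (h 0 η = h 1 η ↔ η ≠ ρ)) ∧
    u = h 0 '' x.2.1 ∪ h 1 '' x.2.1 ∧
    (∀ (i : Fin 2), ∀ η ∈ x.2.1, ∀ ν ∈ x.2.1, g (h i η) (h i ν) = x.2.2 η ν) ∧
    P ⟨m, u, g⟩

/-- `degsqGe T̄ α x` says `degsq_{T̄}(x) ≥ α` (for ordinals `α ≥ 0`). -/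
noncomputable def degsqGe (Tb : ℕ → Tree2) (α : Ordinal.{0}) : PfAp → Prop :=
  Ordinal.limitRecOn (motive := fun _ => PfAp → Prop) α
    (degsqStep (degsqBase Tb))
    (fun _ ih => degsqStep ih)
    (fun o _ ih x => ∀ (β : Ordinal.{0}) (h : β < o), ih β h x)

section Machinery

variable (d : ℕ → Ordinal.{0}) (G : Ordinal.{0})

/-- Component state machine: state is (current value, zero-counter). -/
noncomputable def stC : List Bool → Ordinal.{0} × ℕ → Option (Ordinal.{0} × ℕ)
  | [], s => some s
  | false :: w, s => stC w (s.1, s.2 + 1)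
  | true :: w, s => if d s.2 < s.1 then stC w (d s.2, 0) else none

/-- Global state: `.inl r` = on the spine with `r` remaining ones allowed;
`.inr s` = inside the component with component-state `s`. -/
noncomputable def runS : List Bool → (ℕ ⊕ (Ordinal.{0} × ℕ)) → Option (ℕ ⊕ (Ordinal.{0} × ℕ))
  | [], s => some s
  | b :: w, .inr s => (stC d (b :: w) s).map .inr
  | true :: w, .inl (r+1) => runS w (.inl r)
  | true :: _, .inl 0 => none
  | false :: w, .inl 0 => (stC d w (G, 0)).map .inr
  | false :: _, .inl (_+1) => none

/-- value of a state -/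
def sval : (ℕ ⊕ (Ordinal.{0} × ℕ)) → Ordinal.{0}
  | .inl _ => G
  | .inr s => s.1

noncomputable def vOf : Option (ℕ ⊕ (Ordinal.{0} × ℕ)) → WithBot Ordinal.{0}
  | none => ⊥
  | some s => (sval G s : Ordinal)

theorem vOf_ne_bot {o} : vOf G o ≠ ⊥ ↔ o ≠ none := by
  cases o <;> simp [vOf]

theorem stC_append (s w w') :
    stC d (w ++ w') s = (stC d w s).bind (fun t => stC d w' t) := by
  induction w generalizing s with
  | nil => simp [stC]
  | cons b w ih =>
    cases b with
    | false => simpa only [List.cons_append, stC] using ih _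
    | true =>
      by_cases h : d s.2 < s.1 <;> simp [stC, h, ih]

theorem stC_fst_le {s w t} (h : stC d w s = some t) : t.1 ≤ s.1 := by
  induction w generalizing s with
  | nil => simp [stC] at h; subst h; rfl
  | cons b w ih =>
    cases b with
    | false => simp only [stC] at h; exact ih (s := (s.1, s.2 + 1)) h
    | true =>
      simp only [stC] at h
      split at h
      · exact (ih h).trans (le_of_lt (by assumption))
      · exact absurd h (by simp)

theorem stC_replicate (s k) : stC d (List.replicate k false) s = some (s.1, s.2 + k) := by
  induction k generalizing s with
  | zero => simp [stC]
  | succ k ih =>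
    rw [List.replicate_succ]
    show stC d (List.replicate k false) (s.1, s.2 + 1) = _
    rw [ih]
    simp; omega

theorem stC_eq_fst {s w t} (h : stC d w s = some t) (hv : s.1 ≤ t.1) :
    w = List.replicate w.length false := by
  induction w generalizing s with
  | nil => rfl
  | cons b w ih =>
    cases b with
    | false =>
      rw [List.length_cons, List.replicate_succ]
      exact congrArg _ (ih h hv)
    | true =>
      simp only [stC] at h
      split at h
      · exact absurd ((stC_fst_le d h).trans_lt (by assumption)) (not_lt.2 hv)
      · exact absurd h (by simp)

theorem stC_fst_val {s w t} (h : stC d w s = some t) : t.1 = s.1 ∨ ∃ a, t.1 = d a := by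
  induction w generalizing s with
  | nil => simp [stC] at h; subst h; left; rfl
  | cons b w ih =>
    cases b with
    | false => simp only [stC] at h; exact ih (s := (s.1, s.2 + 1)) h
    | true =>
      simp only [stC] at h
      split at h
      · rcases ih h with h' | h'
        · exact Or.inr ⟨s.2, h'⟩
        · exact Or.inr h'
      · exact absurd h (by simp)

theorem stC_move {s : Ordinal.{0} × ℕ} {c : Ordinal.{0}} {k : ℕ}
    (hd : d (s.2 + k) = c) (hc : c < s.1) :
    stC d (List.replicate k false ++ [true]) s = some (c, 0) := by
  rw [stC_append, stC_replicate, Option.bind_some]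
  show (if d (s.2 + k) < s.1 then stC d [] (d (s.2 + k), 0) else none) = _
  rw [hd, if_pos hc]
  rfl

theorem runS_inr (s w) : runS d G w (.inr s) = (stC d w s).map .inr := by
  cases w <;> simp [runS, stC]

theorem runS_append (s w w') :
    runS d G (w ++ w') s = (runS d G w s).bind (fun t => runS d G w' t) := by
  induction w generalizing s with
  | nil => simp [runS]
  | cons b w ih =>
    cases s with
    | inl r =>
      cases r with
      | zero =>
        cases b with
        | true => simp [runS]
        | false =>
          show (stC d (w ++ w') (G, 0)).map Sum.inr =
            ((stC d w (G, 0)).map Sum.inr).bind fun t => runS d G w' t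
          rw [stC_append]
          cases stC d w (G, 0) with
          | none => simp
          | some t => simp [runS_inr]
      | succ r =>
        cases b with
        | true => simpa only [List.cons_append, runS] using ih _
        | false => simp [runS]
    | inr t =>
      rw [runS_inr, runS_inr, stC_append]
      cases stC d (b :: w) t with
      | none => simp
      | some u => simp [runS_inr]

theorem runS_sval_le {w : List Bool} {s t} (h : runS d G w s = some t) :
    sval G t ≤ sval G s := by
  induction w generalizing s with
  | nil => simp [runS] at h; subst h; rfl
  | cons b w ih =>
    cases s with
    | inr u =>
      rw [runS_inr] at h
      rcases Option.map_eq_some_iff.1 h with ⟨v, hv, rfl⟩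
      exact stC_fst_le d hv
    | inl r =>
      cases r with
      | zero =>
        cases b with
        | true => exact absurd h (by simp [runS])
        | false =>
          simp only [runS] at h
          rcases Option.map_eq_some_iff.1 h with ⟨v, hv, rfl⟩
          exact stC_fst_le d hv
      | succ r =>
        cases b with
        | true => exact ih (s := .inl r) h
        | false => exact absurd h (by simp [runS])

theorem runS_sval_val {w : List Bool} {s t} (h : runS d G w s = some t) :
    sval G t = sval G s ∨ ∃ a, sval G t = d a := by
  cases s with
  | inr u =>
    rw [runS_inr] at h
    rcases Option.map_eq_some_iff.1 h with ⟨v, hv, rfl⟩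
    rcases stC_fst_val d hv with h' | h'
    · exact Or.inl h'
    · exact Or.inr h'
  | inl r =>
    induction w generalizing r with
    | nil => simp [runS] at h; subst h; left; rfl
    | cons b w ih =>
      cases r with
      | zero =>
        cases b with
        | true => exact absurd h (by simp [runS])
        | false =>
          simp only [runS] at h
          rcases Option.map_eq_some_iff.1 h with ⟨v, hv, rfl⟩
          rcases stC_fst_val d hv with h' | h'
          · exact Or.inl h'
          · exact Or.inr h'
      | succ r =>
        cases b with
        | true => simp only [runS] at h; exact ih r h
        | false => exact absurd h (by simp [runS])

theorem vOf_runS_le (w : List Bool) (s) :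
    vOf G (runS d G w s) ≤ ((sval G s : Ordinal) : WithBot Ordinal) := by
  cases h : runS d G w s with
  | none => exact bot_le
  | some t => exact WithBot.coe_le_coe.2 (runS_sval_le d G h)

theorem runS_true_replicate {k r : ℕ} (h : k ≤ r) :
    runS d G (List.replicate k true) (.inl r) = some (.inl (r - k)) := by
  induction k generalizing r with
  | zero => simp [runS]
  | succ k ih =>
    cases r with
    | zero => omega
    | succ r =>
      rw [List.replicate_succ]
      show runS d G (List.replicate k true) (.inl r) = _
      rw [ih (by omega)]
      congr 2
      omega

theorem state_pad (s) (k : ℕ) :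
    ∃ e : List Bool, e.length = k ∧ ∃ t, runS d G e s = some t ∧ sval G t = sval G s := by
  cases s with
  | inr u =>
    refine ⟨List.replicate k false, by simp, ⟨.inr (u.1, u.2 + k), ?_, rfl⟩⟩
    rw [runS_inr, stC_replicate]
    rfl
  | inl r =>
    rcases le_or_gt k r with hk | hk
    · exact ⟨List.replicate k true, by simp, ⟨.inl (r - k), runS_true_replicate d G hk, rfl⟩⟩
    · refine ⟨List.replicate r true ++ (false :: List.replicate (k - r - 1) false),
        by simp; omega, ⟨.inr (G, k - r - 1), ?_, rfl⟩⟩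
      rw [runS_append, runS_true_replicate d G le_rfl, Option.bind_some, Nat.sub_self]
      show (stC d (List.replicate (k - r - 1) false) (G, 0)).map Sum.inr = _
      rw [stC_replicate]
      simp

theorem pad_exists (r : ℕ) (w : List Bool) (k : ℕ) :
    ∃ e : List Bool, e.length = k ∧
      vOf G (runS d G (w ++ e) (.inl r)) = vOf G (runS d G w (.inl r)) := by
  cases hs : runS d G w (.inl r) with
  | none =>
    refine ⟨List.replicate k false, by simp, ?_⟩
    rw [runS_append, hs]
    rfl
  | some s =>
    obtain ⟨e, hl, t, ht, hsv⟩ := state_pad d G s k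
    refine ⟨e, hl, ?_⟩
    rw [runS_append, hs, Option.bind_some, ht]
    show ((sval G t : Ordinal) : WithBot Ordinal) = _
    rw [hsv]
    rfl

theorem ext_unique {s} : ∀ {e₀ e₁ : List Bool}, e₀.length = e₁.length →
    vOf G (runS d G e₀ s) = ((sval G s : Ordinal) : WithBot Ordinal) →
    vOf G (runS d G e₁ s) = ((sval G s : Ordinal) : WithBot Ordinal) →
    e₀ = e₁ := by
  have hstC : ∀ (u : Ordinal × ℕ) (e : List Bool),
      vOf G (runS d G e (.inr u)) = ((u.1 : Ordinal) : WithBot Ordinal) →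
      e = List.replicate e.length false := by
    intro u e he
    rw [runS_inr] at he
    cases hc : stC d e u with
    | none => rw [hc] at he; exact absurd he (by simp [vOf])
    | some t =>
      rw [hc] at he
      simp only [Option.map_some, vOf, sval] at he
      exact stC_eq_fst d hc (le_of_eq (WithBot.coe_inj.1 he).symm)
  cases s with
  | inr u =>
    intro e₀ e₁ hl h₀ h₁
    rw [hstC u e₀ h₀, hstC u e₁ h₁, hl]
  | inl r =>
    intro e₀ e₁
    induction e₀ generalizing e₁ r with
    | nil =>
      intro hl _ _
      exact (List.eq_nil_of_length_eq_zero hl.symm).symm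
    | cons b₀ w₀ ih =>
      intro hl h₀ h₁
      cases e₁ with
      | nil => simp at hl
      | cons b₁ w₁ =>
        cases r with
        | zero =>
          have hb : ∀ (b : Bool) (w : List Bool),
              vOf G (runS d G (b :: w) (.inl 0)) = ((G : Ordinal) : WithBot Ordinal) →
              b = false ∧ w = List.replicate w.length false := by
            intro b w hw
            cases b with
            | true => exact absurd hw (by simp [runS, vOf])
            | false =>
              refine ⟨rfl, ?_⟩
              exact hstC (G, 0) w (by rw [runS_inr]; exact hw)
          obtain ⟨hb₀, hw₀⟩ := hb b₀ w₀ h₀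
          obtain ⟨hb₁, hw₁⟩ := hb b₁ w₁ h₁
          subst hb₀; subst hb₁
          rw [hw₀, hw₁]
          simp at hl
          rw [hl]
        | succ r =>
          have hb : ∀ (b : Bool) (w : List Bool),
              vOf G (runS d G (b :: w) (.inl (r+1))) = ((G : Ordinal) : WithBot Ordinal) →
              b = true := by
            intro b w hw
            cases b with
            | false => exact absurd hw (by simp [runS, vOf])
            | true => rfl
          have hb₀ := hb b₀ w₀ h₀
          have hb₁ := hb b₁ w₁ h₁
          subst hb₀; subst hb₁
          simp only [List.length_cons, Nat.add_right_cancel_iff] at hl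
          rw [ih (r := r) hl h₀ h₁]

/-- the rank of a string in the tree with spine-allowance `r`. -/
noncomputable def rhS (r : ℕ) (w : List Bool) : WithBot Ordinal.{0} :=
  vOf G (runS d G w (.inl r))

theorem rhS_le (r w) : rhS d G r w ≤ (G : WithBot Ordinal) :=
  vOf_runS_le d G w (.inl r)

theorem rhS_append_le (r w w') : rhS d G r (w ++ w') ≤ rhS d G r w := by
  rw [rhS, rhS, runS_append]
  cases h : runS d G w (.inl r) with
  | none => exact le_refl ⊥
  | some s => exact vOf_runS_le d G w' s

theorem rhS_prefix_ne_bot {r} {w w' : List Bool} (h : rhS d G r (w ++ w') ≠ ⊥) :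
    rhS d G r w ≠ ⊥ := by
  intro hb
  exact h (le_bot_iff.1 (hb ▸ rhS_append_le d G r w w'))

theorem rhS_nonlimit (hG : ¬ Order.IsSuccLimit G) (hd : ∀ a, ¬ Order.IsSuccLimit (d a)) {r w v}
    (h : rhS d G r w = ((v : Ordinal) : WithBot Ordinal)) : ¬ Order.IsSuccLimit v := by
  rw [rhS] at h
  cases hr : runS d G w (.inl r) with
  | none => rw [hr] at h; exact absurd h (by simp [vOf])
  | some t =>
    rw [hr] at h
    have hv : sval G t = v := WithBot.coe_inj.1 h
    rcases runS_sval_val d G hr with h' | ⟨a, h'⟩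
    · rw [← hv, h']; exact hG
    · rw [← hv, h']; exact hd a

theorem rank_of_split {r : ℕ} {w e₀ e₁ : List Bool} (hne : w ++ e₀ ≠ w ++ e₁)
    (hl : e₀.length = e₁.length) {c : Ordinal}
    (h₀ : ((c : Ordinal) : WithBot Ordinal) ≤ rhS d G r (w ++ e₀))
    (h₁ : ((c : Ordinal) : WithBot Ordinal) ≤ rhS d G r (w ++ e₁)) :
    ((c + 1 : Ordinal) : WithBot Ordinal) ≤ rhS d G r w := by
  cases hs : runS d G w (.inl r) with
  | none =>
    rw [rhS, runS_append, hs] at h₀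
    exact absurd h₀ (by simp [vOf])
  | some s =>
    have hv : rhS d G r w = ((sval G s : Ordinal) : WithBot Ordinal) := by
      rw [rhS, hs]; rfl
    have hle : ∀ e, rhS d G r (w ++ e) ≤ ((sval G s : Ordinal) : WithBot Ordinal) := by
      intro e
      rw [rhS, runS_append, hs]
      exact vOf_runS_le d G e s
    have hcv : c ≤ sval G s := WithBot.coe_le_coe.1 (h₀.trans (hle e₀))
    rcases lt_or_eq_of_le hcv with hlt | heq
    · rw [hv, Ordinal.add_one_eq_succ]
      exact WithBot.coe_le_coe.2 (Order.succ_le_of_lt hlt)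
    · exfalso
      apply hne
      rw [heq] at h₀ h₁
      have k₀ : rhS d G r (w ++ e₀) = ((sval G s : Ordinal) : WithBot Ordinal) :=
        le_antisymm (hle e₀) h₀
      have k₁ : rhS d G r (w ++ e₁) = ((sval G s : Ordinal) : WithBot Ordinal) :=
        le_antisymm (hle e₁) h₁
      rw [rhS, runS_append, hs, Option.bind_some] at k₀ k₁
      exact congrArg (w ++ ·) (ext_unique d G hl k₀ k₁)

theorem split_exists {s} {c : Ordinal} (hc : c < sval G s) (hcG : c < G)
    (ha : ∀ a₀ : ℕ, ∃ a, a₀ ≤ a ∧ d a = c) :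
    ∃ e : List Bool, 1 ≤ e.length ∧ runS d G e s = some (.inr (c, 0)) := by
  cases s with
  | inr u =>
    obtain ⟨a, haa, hda⟩ := ha u.2
    refine ⟨List.replicate (a - u.2) false ++ [true], by simp, ?_⟩
    rw [runS_inr, stC_move d (by rw [show u.2 + (a - u.2) = a by omega]; exact hda) hc]
    rfl
  | inl r =>
    obtain ⟨a, _, hda⟩ := ha 0
    refine ⟨List.replicate r true ++ (false :: (List.replicate a false ++ [true])),
      by simp; omega, ?_⟩
    rw [runS_append, runS_true_replicate d G le_rfl, Option.bind_some, Nat.sub_self]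
    show (stC d (List.replicate a false ++ [true]) (G, 0)).map Sum.inr = _
    rw [stC_move d (by simpa using hda) hcG]
    rfl

theorem rhS_root (r : ℕ) :
    rhS d G r (List.replicate r true ++ [false]) = (G : WithBot Ordinal) := by
  rw [rhS, runS_append, runS_true_replicate d G le_rfl, Option.bind_some, Nat.sub_self]
  show vOf G ((stC d [] (G, 0)).map Sum.inr) = _
  rfl


end Machinery

section Inter

theorem inter_chain {d d' : ℕ → Ordinal.{0}} {G G' : Ordinal.{0}} :
    ∀ {w : List Bool} {r r' : ℕ}, r ≠ r' →
    runS d G w (.inl r) ≠ none → runS d' G' w (.inl r') ≠ none →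
    w = List.replicate w.length true ∧ w.length ≤ r ∧ w.length ≤ r' := by
  intro w
  induction w with
  | nil => intro r r' _ _ _; exact ⟨rfl, by simp, by simp⟩
  | cons b w ih =>
    intro r r' hrr h h'
    cases b with
    | true =>
      cases r with
      | zero => exact absurd (by simp [runS]) h
      | succ r =>
        cases r' with
        | zero => exact absurd (by simp [runS]) h'
        | succ r' =>
          obtain ⟨hw, h1, h2⟩ := ih (r := r) (r' := r') (by omega) h h'
          refine ⟨?_, by simpa using h1, by simpa using h2⟩
          rw [List.length_cons, List.replicate_succ]
          exact congrArg _ hw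
    | false =>
      cases r with
      | zero =>
        cases r' with
        | zero => exact absurd rfl hrr
        | succ r' => exact absurd (by simp [runS]) h'
      | succ r => exact absurd (by simp [runS]) h

end Inter

section Trees

variable (d γ : ℕ → Ordinal.{0})

/-- rank of a string in the `n`-th tree -/
noncomputable def rhoN (n : ℕ) (w : List Bool) : WithBot Ordinal.{0} :=
  rhS d (γ n + 1) n w

theorem ofFn_castLE {l m : ℕ} (h : m ≤ l) (σ : Fin l → Bool) :
    List.ofFn (fun i : Fin m => σ (Fin.castLE h i)) = (List.ofFn σ).take m := by
  apply List.ext_getElem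
  · simp [Nat.min_eq_left h]
  · intro i h1 h2
    simp [List.getElem_ofFn, List.getElem_take]

theorem zero_le_iff_ne_bot {v : WithBot Ordinal.{0}} :
    ((0 : Ordinal) : WithBot Ordinal) ≤ v ↔ v ≠ ⊥ := by
  cases v with
  | bot => simp
  | coe v₀ => simp [WithBot.coe_le_coe, zero_le]

end Trees



section Trees2

variable (d γ : ℕ → Ordinal.{0})

/-- The sequence of `(2,2)`-trees determined by the ranks `rhoN`. -/
noncomputable def TT (n : ℕ) : Tree2 where
  mem := fun l => {p | rhoN d γ n (List.ofFn p.1) ≠ ⊥ ∧ rhoN d γ n (List.ofFn p.2) ≠ ⊥}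
  closed := by
    intro l p hp m hm
    constructor
    · show rhoN d γ n (List.ofFn fun i => p.1 (Fin.castLE hm i)) ≠ ⊥
      rw [ofFn_castLE hm]
      exact rhS_prefix_ne_bot _ _
        (by rw [List.take_append_drop m (List.ofFn p.1)]; exact hp.1)
    · show rhoN d γ n (List.ofFn fun i => p.2 (Fin.castLE hm i)) ≠ ⊥
      rw [ofFn_castLE hm]
      exact rhS_prefix_ne_bot _ _
        (by rw [List.take_append_drop m (List.ofFn p.2)]; exact hp.2)

/-- the invariant describing `degsq ≥ β` (with `c = β + 1`). -/
def cRHS (c : Ordinal.{0}) (x : PfAp) : Prop :=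
  x.2.1.Nonempty ∧ ∃ n : ℕ, (∀ η ∈ x.2.1, ∀ ν ∈ x.2.1, x.2.2 η ν = n) ∧
    ∀ η ∈ x.2.1, (c : WithBot Ordinal) ≤ rhoN d γ n (List.ofFn η)

/-- the pairwise form of the invariant. -/
def cPW (c : Ordinal.{0}) (y : PfAp) : Prop :=
  ∀ η ∈ y.2.1, ∀ ν ∈ y.2.1,
    (c : WithBot Ordinal) ≤ rhoN d γ (y.2.2 η ν) (List.ofFn η) ∧
    (c : WithBot Ordinal) ≤ rhoN d γ (y.2.2 η ν) (List.ofFn ν)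

theorem cRHS_pw {c y} (h : cRHS d γ c y) : cPW d γ c y := by
  obtain ⟨-, n, hg, hv⟩ := h
  intro η hη ν hν
  rw [hg η hη ν hν]
  exact ⟨hv η hη, hv ν hν⟩

theorem cRHS_mono {c c' : Ordinal} (hcc : c' ≤ c) {x} (h : cRHS d γ c x) :
    cRHS d γ c' x := by
  obtain ⟨hne, n, hg, hv⟩ := h
  exact ⟨hne, n, hg, fun η hη => le_trans (WithBot.coe_le_coe.2 hcc) (hv η hη)⟩

/-- convert a list of length `m` to a function `Fin m → Bool`. -/
def fnL (m : ℕ) (w : List Bool) : Fin m → Bool := fun i => w.getD i false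

theorem ofFn_fnL {m : ℕ} {w : List Bool} (h : w.length = m) :
    List.ofFn (fnL m w) = w := by
  apply List.ext_getElem
  · simp [h]
  · intro i h1 h2
    simp only [List.getElem_ofFn, fnL]
    exact List.getD_eq_getElem w false h2

theorem fnL_append_left {l m : ℕ} (hle : l ≤ m) (η : Fin l → Bool) (E : List Bool)
    (j : Fin l) : fnL m (List.ofFn η ++ E) (Fin.castLE hle j) = η j := by
  have hj : (j : ℕ) < (List.ofFn η ++ E).length := by
    simp only [List.length_append, List.length_ofFn]
    omega
  show (List.ofFn η ++ E).getD (Fin.castLE hle j) false = η j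
  rw [show ((Fin.castLE hle j : Fin m) : ℕ) = (j : ℕ) from rfl]
  rw [List.getD_eq_getElem _ false hj,
    List.getElem_append_left (by simp [List.length_ofFn])]
  simp

theorem step_of_rhs (c : Ordinal.{0})
    (Hm : ∀ (a₀ n : ℕ), c ≤ γ n → ∃ a, a₀ ≤ a ∧ d a = c)
    (P : PfAp → Prop) (hP : ∀ y : PfAp, cRHS d γ c y → P y)
    (x : PfAp) (hx : cRHS d γ (c + 1) x) : degsqStep P x := by
  obtain ⟨hne, n, hg, hv⟩ := hx
  refine ⟨hne, ?_⟩
  intro ρ hρ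
  have hvρ := hv ρ hρ
  set G : Ordinal := γ n + 1 with hG
  cases hs : runS d G (List.ofFn ρ) (.inl n) with
  | none =>
    rw [rhoN, rhS, ← hG, hs] at hvρ
    exact absurd hvρ (by simp [vOf])
  | some s =>
    have hsv : ((c + 1 : Ordinal) : WithBot Ordinal) ≤ ((sval G s : Ordinal) : WithBot Ordinal) := by
      rw [rhoN, rhS, ← hG, hs] at hvρ
      exact hvρ
    have hc1 : c + 1 ≤ sval G s := WithBot.coe_le_coe.1 hsv
    have hcc1 : c < c + 1 := by
      rw [Ordinal.add_one_eq_succ]; exact Order.lt_succ c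
    have hcs : c < sval G s := lt_of_lt_of_le hcc1 hc1
    have hsG : sval G s ≤ G := by
      have := runS_sval_le d G hs
      simpa [sval] using this
    have hcγ : c ≤ γ n := by
      have : c < γ n + 1 := lt_of_lt_of_le hcs hsG
      rwa [Ordinal.add_one_eq_succ, Order.lt_succ_iff] at this
    have hcG : c < G := lt_of_le_of_lt hcγ (by rw [hG, Ordinal.add_one_eq_succ]; exact Order.lt_succ _)
    obtain ⟨e, he1, hes⟩ := split_exists d G hcs hcG (fun a₀ => Hm a₀ n hcγ)
    set m := x.1 + e.length with hm
    have hle : x.1 ≤ m := Nat.le_add_right _ _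
    have hpad : ∀ η : Fin x.1 → Bool, ∃ e' : List Bool, e'.length = e.length ∧
        rhS d G n (List.ofFn η ++ e') = rhS d G n (List.ofFn η) :=
      fun η => pad_exists d G n (List.ofFn η) e.length
    classical
    set padE : (Fin x.1 → Bool) → List Bool := fun η => (hpad η).choose with hpadE
    have hlenp : ∀ η, (List.ofFn η ++ padE η).length = m := by
      intro η
      simp [List.length_append, (hpad η).choose_spec.1, hm, hpadE]
    have hlene : (List.ofFn ρ ++ e).length = m := by
      simp [List.length_append, hm]
    set h : Fin 2 → (Fin x.1 → Bool) → (Fin m → Bool) :=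
      fun i η => if i = 1 ∧ η = ρ then fnL m (List.ofFn ρ ++ e)
        else fnL m (List.ofFn η ++ padE η) with hh
    set g' : (Fin m → Bool) → (Fin m → Bool) → ℕ :=
      fun τ τ' => x.2.2 (fun j => τ (Fin.castLE hle j)) (fun j => τ' (Fin.castLE hle j)) with hg'
    have key1 : ∀ (i : Fin 2), ∀ η ∈ x.2.1, ∀ j : Fin x.1, h i η (Fin.castLE hle j) = η j := by
      intro i η hη j
      simp only [hh]
      by_cases hcase : i = 1 ∧ η = ρ
      · rw [if_pos hcase, hcase.2]
        exact fnL_append_left hle ρ e j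
      · rw [if_neg hcase]
        exact fnL_append_left hle η (padE η) j
    have hlists : ∀ (i : Fin 2) (η : Fin x.1 → Bool),
        List.ofFn (h i η) = (if i = 1 ∧ η = ρ then List.ofFn ρ ++ e else List.ofFn η ++ padE η) := by
      intro i η
      simp only [hh]
      by_cases hcase : i = 1 ∧ η = ρ
      · rw [if_pos hcase, if_pos hcase, ofFn_fnL hlene]
      · rw [if_neg hcase, if_neg hcase, ofFn_fnL (hlenp η)]
    have hval_e : rhS d G n (List.ofFn ρ ++ e) = ((c : Ordinal) : WithBot Ordinal) := by
      rw [rhS, runS_append, hs, Option.bind_some, hes]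
      rfl
    have key2 : ∀ η ∈ x.2.1, (h 0 η = h 1 η ↔ η ≠ ρ) := by
      intro η hη
      constructor
      · intro hEq hηρ
        subst hηρ
        have h0 : List.ofFn (h 0 η) = List.ofFn η ++ padE η := by
          rw [hlists]; simp
        have h1 : List.ofFn (h 1 η) = List.ofFn η ++ e := by
          rw [hlists]; simp
        have : List.ofFn η ++ padE η = List.ofFn η ++ e := by
          rw [← h0, ← h1, hEq]
        have hvv : rhS d G n (List.ofFn η ++ padE η) = ((c : Ordinal) : WithBot Ordinal) := by
          rw [this, hval_e]
        rw [(hpad η).choose_spec.2] at hvv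
        have : ((c + 1 : Ordinal) : WithBot Ordinal) ≤ ((c : Ordinal) : WithBot Ordinal) := by
          rw [← hvv]
          exact hv η hη
        exact absurd (WithBot.coe_le_coe.1 this) (not_le.2 hcc1)
      · intro hηρ
        simp [hh, hηρ]
    have key4 : ∀ (i : Fin 2), ∀ η ∈ x.2.1, ∀ ν ∈ x.2.1, g' (h i η) (h i ν) = x.2.2 η ν := by
      intro i η hη ν hν
      simp only [hg']
      have e1 : (fun j => h i η (Fin.castLE hle j)) = η := funext fun j => key1 i η hη j
      have e2 : (fun j => h i ν (Fin.castLE hle j)) = ν := funext fun j => key1 i ν hν j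
      rw [e1, e2]
    refine ⟨m, hle, h 0 '' x.2.1 ∪ h 1 '' x.2.1, g', h, key1, key2, rfl, key4, ?_⟩
    apply hP
    have hres : ∀ (i : Fin 2) (η : Fin x.1 → Bool), η ∈ x.2.1 →
        (fun j => h i η (Fin.castLE hle j)) = η :=
      fun i η hη => funext (key1 i η hη)
    refine ⟨⟨h 0 ρ, Or.inl ⟨ρ, hρ, rfl⟩⟩, n, ?_, ?_⟩
    · rintro τ hτ τ' hτ'
      rcases hτ with ⟨η, hη, rfl⟩ | ⟨η, hη, rfl⟩ <;>
        rcases hτ' with ⟨ν, hν, rfl⟩ | ⟨ν, hν, rfl⟩ <;>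
        · show g' _ _ = n
          simp only [hg']
          rw [hres _ _ hη, hres _ _ hν]
          exact hg η hη ν hν
    · rintro τ (⟨η, hη, rfl⟩ | ⟨η, hη, rfl⟩)
      · show ((c : Ordinal) : WithBot Ordinal) ≤ rhoN d γ n (List.ofFn (h 0 η))
        rw [rhoN, ← hG, hlists 0 η,
          if_neg (fun hc' : (0 : Fin 2) = 1 ∧ η = ρ => by exact absurd hc'.1 (by decide)),
          (hpad η).choose_spec.2]
        exact le_trans (WithBot.coe_le_coe.2 (le_of_lt hcc1)) (hv η hη)
      · show ((c : Ordinal) : WithBot Ordinal) ≤ rhoN d γ n (List.ofFn (h 1 η))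
        rw [rhoN, ← hG, hlists 1 η]
        by_cases hcase : η = ρ
        · rw [if_pos ⟨rfl, hcase⟩, hval_e]
        · rw [if_neg (fun hc' : (1 : Fin 2) = 1 ∧ η = ρ => hcase hc'.2),
            (hpad η).choose_spec.2]
          exact le_trans (WithBot.coe_le_coe.2 (le_of_lt hcc1)) (hv η hη)

theorem rhs_of_step (c : Ordinal.{0}) (P : PfAp → Prop)
    (hP : ∀ y, P y → y.2.1.Nonempty ∧ cPW d γ c y)
    (x : PfAp) (hx : degsqStep P x) : cRHS d γ (c + 1) x := by
  obtain ⟨hne, hstep⟩ := hx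
  have hbot : ∀ (v : WithBot Ordinal.{0}), ((c : Ordinal) : WithBot Ordinal) ≤ v → v ≠ ⊥ := by
    intro v hv hb
    rw [hb] at hv
    exact WithBot.not_coe_le_bot c hv
  have key : ∀ σ ∈ x.2.1, (∀ ν ∈ x.2.1, x.2.2 σ ν = x.2.2 σ σ ∧ x.2.2 ν σ = x.2.2 σ σ) ∧
      ((c + 1 : Ordinal) : WithBot Ordinal) ≤ rhoN d γ (x.2.2 σ σ) (List.ofFn σ) := by
    intro σ hσ
    obtain ⟨m, hle, u', g', h, H1, H2, H3, H4, HP⟩ := hstep σ hσ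
    obtain ⟨hne', hpw⟩ := hP _ HP
    have hmem : ∀ (i : Fin 2), ∀ η ∈ x.2.1, h i η ∈ u' := by
      intro i η hη
      rw [H3]
      fin_cases i
      · exact Or.inl ⟨η, hη, rfl⟩
      · exact Or.inr ⟨η, hη, rfl⟩
    have hdiff : h 0 σ ≠ h 1 σ := fun hEq => (H2 σ hσ).1 hEq rfl
    have htake : ∀ (i : Fin 2), ∀ η ∈ x.2.1,
        List.ofFn (h i η) = List.ofFn η ++ (List.ofFn (h i η)).drop x.1 := by
      intro i η hη
      conv_lhs => rw [← List.take_append_drop x.1 (List.ofFn (h i η))]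
      congr 1
      apply List.ext_getElem
      · simp [hle]
      · intro j h1 h2
        simp only [List.getElem_take, List.getElem_ofFn]
        have h2' : j < x.1 := by simpa using h2
        exact H1 i η hη ⟨j, h2'⟩
    have hvals : ∀ (i : Fin 2), ∀ η ∈ x.2.1, ∀ ν ∈ x.2.1,
        ((c : Ordinal) : WithBot Ordinal) ≤ rhoN d γ (x.2.2 η ν) (List.ofFn (h i η)) ∧
        ((c : Ordinal) : WithBot Ordinal) ≤ rhoN d γ (x.2.2 η ν) (List.ofFn (h i ν)) := by
      intro i η hη ν hν
      have := hpw (h i η) (hmem i η hη) (h i ν) (hmem i ν hν)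
      rw [show ((⟨m, (u', g')⟩ : PfAp).2.2 : (Fin m → Bool) → (Fin m → Bool) → ℕ) = g'
        from rfl] at this
      rwa [H4 i η hη ν hν] at this
    have hconst : ∀ ν ∈ x.2.1, x.2.2 σ ν = x.2.2 σ σ ∧ x.2.2 ν σ = x.2.2 σ σ := by
      have hAB : ∀ b : ℕ,
          (∀ i : Fin 2, ((c : Ordinal) : WithBot Ordinal) ≤ rhoN d γ b (List.ofFn (h i σ))) →
          b = x.2.2 σ σ := by
        intro b hb
        by_contra hab
        have hnn : ∀ i : Fin 2,
            runS d (γ b + 1) (List.ofFn (h i σ)) (.inl b) ≠ none :=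
          fun i => (vOf_ne_bot (γ b + 1)).1 (hbot _ (hb i))
        have hnn' : ∀ i : Fin 2,
            runS d (γ (x.2.2 σ σ) + 1) (List.ofFn (h i σ)) (.inl (x.2.2 σ σ)) ≠ none :=
          fun i => (vOf_ne_bot (γ (x.2.2 σ σ) + 1)).1 (hbot _ (hvals i σ hσ σ hσ).1)
        have w0 := inter_chain hab (hnn 0) (hnn' 0)
        have w1 := inter_chain hab (hnn 1) (hnn' 1)
        exact hdiff (List.ofFn_injective (by rw [w0.1, w1.1]; simp))
      intro ν hν
      constructor
      · exact hAB (x.2.2 σ ν) (fun i => (hvals i σ hσ ν hν).1)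
      · exact hAB (x.2.2 ν σ) (fun i => (hvals i ν hν σ hσ).2)
    refine ⟨hconst, ?_⟩
    have h0 := (hvals 0 σ hσ σ hσ).1
    have h1 := (hvals 1 σ hσ σ hσ).1
    rw [htake 0 σ hσ] at h0
    rw [htake 1 σ hσ] at h1
    have hne01 : List.ofFn σ ++ (List.ofFn (h 0 σ)).drop x.1 ≠
        List.ofFn σ ++ (List.ofFn (h 1 σ)).drop x.1 := by
      rw [← htake 0 σ hσ, ← htake 1 σ hσ]
      intro hEq
      exact hdiff (List.ofFn_injective hEq)
    exact rank_of_split d (γ (x.2.2 σ σ) + 1) hne01 (by simp) h0 h1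
  obtain ⟨σ₀, hσ₀⟩ := hne
  refine ⟨⟨σ₀, hσ₀⟩, x.2.2 σ₀ σ₀, ?_, ?_⟩
  · intro η hη ν hν
    have k1 := (key η hη).1 ν hν
    have k2 := (key η hη).1 σ₀ hσ₀
    have k3 := (key σ₀ hσ₀).1 η hη
    rw [k1.1, ← k2.1, k3.2]
  · intro η hη
    have k2 := (key η hη).1 σ₀ hσ₀
    have k3 := (key σ₀ hσ₀).1 η hη
    have hgg : x.2.2 η η = x.2.2 σ₀ σ₀ := by rw [← k2.1, k3.2]
    rw [← hgg]
    exact (key η hη).2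

end Trees2

theorem degsqGe_zero (Tb : ℕ → Tree2) : degsqGe Tb 0 = degsqStep (degsqBase Tb) := by
  unfold degsqGe
  exact Ordinal.limitRecOn_zero _ _ _

theorem degsqGe_succ (Tb : ℕ → Tree2) (o : Ordinal.{0}) :
    degsqGe Tb (Order.succ o) = degsqStep (degsqGe Tb o) := by
  unfold degsqGe
  exact Ordinal.limitRecOn_succ _ _ _ _

theorem degsqGe_limit (Tb : ℕ → Tree2) {o : Ordinal.{0}} (ho : Order.IsSuccLimit o) (x : PfAp) :
    degsqGe Tb o x ↔ ∀ β < o, degsqGe Tb β x := by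
  unfold degsqGe
  rw [Ordinal.limitRecOn_limit _ _ _ _ ho]

section Claim

variable (d γ : ℕ → Ordinal.{0})

theorem claimC (Hd : ∀ a, ¬ Order.IsSuccLimit (d a))
    (Hm : ∀ (a₀ : ℕ) (c : Ordinal.{0}) (n : ℕ), ¬ Order.IsSuccLimit c → c ≤ γ n →
      ∃ a, a₀ ≤ a ∧ d a = c)
    (β : Ordinal.{0}) : ∀ x : PfAp, degsqGe (TT d γ) β x ↔ cRHS d γ (β + 1) x := by
  induction β using Ordinal.limitRecOn with
  | zero =>
    intro x
    rw [degsqGe_zero]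
    constructor
    · intro hstep
      refine rhs_of_step d γ 0 (degsqBase (TT d γ)) ?_ x hstep
      intro y hy
      obtain ⟨hne, hmemb⟩ := hy
      refine ⟨hne, ?_⟩
      intro η hη ν hν
      have hm := hmemb η hη ν hν
      exact ⟨zero_le_iff_ne_bot.2 hm.1, zero_le_iff_ne_bot.2 hm.2⟩
    · intro hr
      refine step_of_rhs d γ 0
        (fun a₀ n h => Hm a₀ 0 n Ordinal.not_isSuccLimit_zero h) (degsqBase (TT d γ)) ?_ x hr
      intro y hy
      obtain ⟨hne, n, hg, hv⟩ := hy
      refine ⟨hne, ?_⟩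
      intro η hη ν hν
      show rhoN d γ (y.2.2 η ν) (List.ofFn η) ≠ ⊥ ∧ rhoN d γ (y.2.2 η ν) (List.ofFn ν) ≠ ⊥
      rw [hg η hη ν hν]
      exact ⟨zero_le_iff_ne_bot.1 (hv η hη), zero_le_iff_ne_bot.1 (hv ν hν)⟩
  | add_one o ih =>
    intro x
    rw [Ordinal.add_one_eq_succ, degsqGe_succ]
    have hsucc : Order.succ o + 1 = (o + 1) + 1 := by rw [← Ordinal.add_one_eq_succ]
    rw [hsucc]
    constructor
    · intro hstep
      exact rhs_of_step d γ (o + 1) _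
        (fun y hy => ⟨((ih y).1 hy).1, cRHS_pw d γ ((ih y).1 hy)⟩) x hstep
    · intro hr
      refine step_of_rhs d γ (o + 1)
        (fun a₀ n h => Hm a₀ (o + 1) n ?_ h) (degsqGe (TT d γ) o)
        (fun y hy => (ih y).2 hy) x hr
      rw [Ordinal.add_one_eq_succ]
      exact Order.not_isSuccLimit_succ o
  | limit o ho ih =>
    intro x
    rw [degsqGe_limit _ ho]
    constructor
    · intro hall
      have R : ∀ β', β' < o → cRHS d γ (β' + 1) x := fun β' h => (ih β' h x).1 (hall β' h)
      obtain ⟨hne, n₀, hg₀, hv₀⟩ := R 0 ho.pos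
      obtain ⟨σ₀, hσ₀⟩ := hne
      refine ⟨⟨σ₀, hσ₀⟩, n₀, hg₀, ?_⟩
      intro η hη
      have hvβ : ∀ β', β' < o →
          ((β' + 1 : Ordinal) : WithBot Ordinal) ≤ rhoN d γ n₀ (List.ofFn η) := by
        intro β' h
        obtain ⟨-, n', hg', hv'⟩ := R β' h
        have hn' : n' = n₀ := by rw [← hg' σ₀ hσ₀ σ₀ hσ₀, hg₀ σ₀ hσ₀ σ₀ hσ₀]
        rw [← hn']
        exact hv' η hη
      cases hveq : rhoN d γ n₀ (List.ofFn η) with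
      | bot =>
        have := hvβ 0 ho.pos
        rw [hveq] at this
        exact absurd this (WithBot.not_coe_le_bot _)
      | coe v₀ =>
        have hord : ∀ β', β' < o → β' + 1 ≤ v₀ := by
          intro β' h
          have := hvβ β' h
          rw [hveq] at this
          exact WithBot.coe_le_coe.1 this
        have hov : o ≤ v₀ := by
          by_contra hlt
          push_neg at hlt
          have := hord v₀ hlt
          rw [Ordinal.add_one_eq_succ] at this
          exact lt_irrefl v₀ (Order.succ_le_iff.1 this)
        have hnl : ¬ Order.IsSuccLimit v₀ :=
          rhS_nonlimit d (γ n₀ + 1)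
            (by rw [Ordinal.add_one_eq_succ]; exact Order.not_isSuccLimit_succ _) Hd hveq
        have hlt : o < v₀ := lt_of_le_of_ne hov (fun hEq => hnl (hEq ▸ ho))
        exact WithBot.coe_le_coe.2
          (by rw [Ordinal.add_one_eq_succ]; exact Order.succ_le_of_lt hlt)
    · intro hr β' hβ'
      apply (ih β' hβ' x).2
      apply cRHS_mono d γ ?_ hr
      rw [Ordinal.add_one_eq_succ, Ordinal.add_one_eq_succ]
      exact Order.succ_le_succ hβ'.le

end Claim


/-- for every `α < ω₁` there is an ω-sequence `T̄` of (2,2)-trees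
with `degsq(T̄) = α`, i.e. no pair has degree `≥ α` while for each `β < α` some
pair has degree `≥ β`. -/
theorem stmt_14 (α : Ordinal.{0}) (hα : α < (Cardinal.aleph 1).ord) :
    ∃ T : ℕ → Tree2,
      (∀ x : PfAp, ¬ degsqGe T α x) ∧
      (∀ β < α, ∃ x : PfAp, degsqGe T β x) := by
  rcases eq_or_ne α 0 with rfl | hα0
  · -- the empty sequence of trees
    refine ⟨fun _ => ⟨fun _ => ∅, fun _ p hp => absurd hp (Set.notMem_empty p)⟩, ?_, ?_⟩
    · intro x hx
      rw [degsqGe_zero] at hx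
      obtain ⟨⟨ρ, hρ⟩, hstep⟩ := hx
      obtain ⟨m, _, u', g', h, -, -, -, -, HP⟩ := hstep ρ hρ
      obtain ⟨⟨τ, hτ⟩, hmemb⟩ := HP
      exact Set.notMem_empty _ (hmemb τ hτ τ hτ)
    · intro β hβ
      exact absurd hβ (not_lt_of_ge zero_le)
  · classical
    have hαpos : 0 < α := pos_iff_ne_zero.2 hα0
    have hct : (Set.Iio α).Countable := by
      rw [Cardinal.countable_iff_lt_aleph_one, Ordinal.mk_Iio_ordinal]
      have h1 : α.card < Cardinal.aleph 1 := Cardinal.lt_ord.1 hα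
      calc Cardinal.lift.{1} α.card
          < Cardinal.lift.{1} (Cardinal.aleph 1) := Cardinal.lift_lt.2 h1
        _ = Cardinal.aleph 1 := by rw [Cardinal.lift_aleph, Ordinal.lift_one]
    obtain ⟨γf, hγf⟩ :=
      (Set.countable_iff_exists_surjective (s := Set.Iio α) ⟨0, hαpos⟩).1 hct
    set γ : ℕ → Ordinal.{0} := fun k => ((γf k : Set.Iio α) : Ordinal) with hγdef
    set dd : ℕ → Ordinal.{0} :=
      fun a => if Order.IsSuccLimit (γ (Nat.unpair a).2) then 0 else γ (Nat.unpair a).2 with hdd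
    have hγlt : ∀ k, γ k < α := fun k => (γf k).2
    have Hγsur : ∀ c : Ordinal.{0}, c < α → ∃ k, γ k = c := by
      intro c hc
      obtain ⟨k, hk⟩ := hγf ⟨c, hc⟩
      exact ⟨k, congrArg Subtype.val hk⟩
    have Hd : ∀ a, ¬ Order.IsSuccLimit (dd a) := by
      intro a
      rw [hdd]
      dsimp only
      split
      · exact Ordinal.not_isSuccLimit_zero
      · assumption
    have Hm : ∀ (a₀ : ℕ) (c : Ordinal.{0}) (n : ℕ), ¬ Order.IsSuccLimit c → c ≤ γ n →
        ∃ a, a₀ ≤ a ∧ dd a = c := by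
      intro a₀ c n hcl hcn
      obtain ⟨k, hk⟩ := Hγsur c (lt_of_le_of_lt hcn (hγlt n))
      refine ⟨Nat.pair a₀ k, Nat.left_le_pair a₀ k, ?_⟩
      rw [hdd]
      dsimp only
      rw [Nat.unpair_pair]
      dsimp only
      rw [hk, if_neg hcl]
    refine ⟨TT dd γ, ?_, ?_⟩
    · intro x hx
      obtain ⟨⟨σ, hσ⟩, n, hg, hv⟩ := (claimC dd γ Hd Hm α x).1 hx
      have h1 := hv σ hσ
      have h2 : rhoN dd γ n (List.ofFn σ) ≤ ((γ n + 1 : Ordinal) : WithBot Ordinal) :=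
        rhS_le dd (γ n + 1) n _
      have h3 : α + 1 ≤ γ n + 1 := WithBot.coe_le_coe.1 (le_trans h1 h2)
      have h4 : γ n + 1 ≤ α := by
        rw [Ordinal.add_one_eq_succ]
        exact Order.succ_le_of_lt (hγlt n)
      have h5 : α + 1 ≤ α := le_trans h3 h4
      rw [Ordinal.add_one_eq_succ] at h5
      exact lt_irrefl α (Order.succ_le_iff.1 h5)
    · intro β hβ
      obtain ⟨k, hk⟩ := Hγsur β hβ
      refine ⟨⟨k + 1, {fun i : Fin (k + 1) => decide ((i : ℕ) < k)}, fun _ _ => k⟩, ?_⟩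
      apply (claimC dd γ Hd Hm β _).2
      refine ⟨⟨_, rfl⟩, k, fun _ _ _ _ => rfl, ?_⟩
      intro η hη
      rw [Set.mem_singleton_iff] at hη
      subst hη
      have hlist : List.ofFn (fun i : Fin (k + 1) => decide ((i : ℕ) < k)) =
          List.replicate k true ++ [false] := by
        apply List.ext_getElem
        · simp
        · intro j h1 h2
          simp only [List.getElem_ofFn]
          rcases Nat.lt_or_ge j k with hj | hj
          · rw [List.getElem_append_left (by simpa using hj)]
            simp [hj]
          · have hjk : j = k := by simp at h1; omega
            subst hjk
            rw [List.getElem_append_right (by simp)]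
            simp
      show ((β + 1 : Ordinal) : WithBot Ordinal) ≤ rhoN dd γ k
        (List.ofFn (fun i : Fin (k + 1) => decide ((i : ℕ) < k)))
      rw [hlist, rhoN, rhS_root dd (γ k + 1) k, hk]

end Sh522
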